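/- Let λ : B → B(H ⊗ C^{d+1}) be linear and conditionally completely positive with respect to the representation ι(X) = X ⊕ 0 (i.e., Σ_k ι(X_k)η_k = 0 ⟹ Σ_{k,l}⟨η_k, λ(X_k†X_l)η_l⟩ ≥ 0), with λ(X†) = λ(X)^† in the appropriate sense. Then the dissipation kernel Δ(X,Z) := λ(X†Z) − ι(X)†λ(Z) − λ(X)†ι(Z) + ι(X)†λ(I)ι(Z) is a positive-definite kernel: Σ_{X,Z} ⟨η_X, Δ(X,Z) η_Z⟩ ≥ 0 for all finitely supported families (η_X) with η_X ∈ H ⊗ C^{d+1}. -/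

import Mathlib

open ContinuousLinearMap
open scoped ComplexOrder

/-- `H^{d+1}` with the `ℓ²` norm is complete when `H` is. -/
instance piLpCompleteSpace {H : Type*} [NormedAddCommGroup H] [CompleteSpace H] (m : ℕ) :
    CompleteSpace (PiLp 2 (fun _ : Fin m => H)) :=
  inferInstance

/-- If `λ : B → B(H ⊗ ℂ^{d+1})` is linear, `♭`-symmetric (`λ(X†) = λ(X)†`) and
conditionally completely positive with respect to the degenerate representation
`ι(X) = X ⊕ 0`, then the dissipation kernel
`Δ(X,Z) = λ(X†Z) − ι(X)†λ(Z) − λ(X)†ι(Z) + ι(X)†λ(I)ι(Z)` is positive definite. -/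
theorem stmt16 {H : Type*} [NormedAddCommGroup H] [InnerProductSpace ℂ H] [CompleteSpace H]
    (d : ℕ)
    (ι : (H →L[ℂ] H) → (PiLp 2 (fun _ : Fin (d + 1) => H) →L[ℂ]
      PiLp 2 (fun _ : Fin (d + 1) => H)))
    (hι : ∀ (X : H →L[ℂ] H) (v : PiLp 2 (fun _ : Fin (d + 1) => H)),
      ι X v = (WithLp.equiv 2 _).symm
        (fun μ => if μ = 0 then X ((WithLp.equiv 2 _) v 0) else 0))
    (Λ : (H →L[ℂ] H) →ₗ[ℂ] (PiLp 2 (fun _ : Fin (d + 1) => H) →L[ℂ]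
      PiLp 2 (fun _ : Fin (d + 1) => H)))
    (hsym : ∀ X, Λ (star X) = adjoint (Λ X))
    (hccp : ∀ (n : ℕ) (X : Fin n → H →L[ℂ] H)
        (η : Fin n → PiLp 2 (fun _ : Fin (d + 1) => H)),
      (∑ k, ι (X k) (η k)) = 0 →
      0 ≤ ∑ k, ∑ l, (inner ℂ (η k) ((Λ (star (X k) * X l)) (η l)) : ℂ)) :
    ∀ (n : ℕ) (X : Fin n → H →L[ℂ] H)
      (η : Fin n → PiLp 2 (fun _ : Fin (d + 1) => H)),
      0 ≤ ∑ k, ∑ l,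
        (inner ℂ (η k)
          ((Λ (star (X k) * X l)
            - (adjoint (ι (X k))) ∘L (Λ (X l))
            - (adjoint (Λ (X k))) ∘L (ι (X l))
            + (adjoint (ι (X k))) ∘L (Λ 1) ∘L (ι (X l))) (η l)) : ℂ) := by
  intro n X η
  set S := ∑ k, ι (X k) (η k) with hS
  have hι1 : ∀ (Y : H →L[ℂ] H) (v : PiLp 2 (fun _ : Fin (d + 1) => H)),
      ι 1 (ι Y v) = ι Y v := by
    intro Y v
    rw [hι 1, hι Y v]
    simp
  have hS1 : ι 1 S = S := by
    rw [hS, map_sum]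
    exact Finset.sum_congr rfl fun k _ => hι1 _ _
  have hcond : (∑ k : Fin (n+1), ι ((Fin.snoc X 1 : Fin (n+1) → H →L[ℂ] H) k) ((Fin.snoc η (-S) : Fin (n+1) → PiLp 2 (fun _ : Fin (d + 1) => H)) k)) = 0 := by
    rw [Fin.sum_univ_castSucc]
    simp only [Fin.snoc_castSucc, Fin.snoc_last, map_neg, hS1, ← hS]
    exact add_neg_cancel S
  refine le_of_le_of_eq (hccp (n+1) (Fin.snoc X (1 : H →L[ℂ] H)) (Fin.snoc η (-S)) hcond) ?_
  rw [Fin.sum_univ_castSucc]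
  simp only [Fin.sum_univ_castSucc, Fin.snoc_castSucc, Fin.snoc_last, star_one, one_mul,
    mul_one, hsym, hS, inner_neg_left, inner_neg_right, neg_neg, map_sum, sum_inner,
    inner_sum, map_neg, adjoint_inner_right, ContinuousLinearMap.sub_apply,
    ContinuousLinearMap.add_apply, ContinuousLinearMap.comp_apply, inner_sub_right,
    inner_add_right, Finset.sum_sub_distrib, Finset.sum_add_distrib, Finset.sum_neg_distrib]
  have hc : ∑ x : Fin n, ∑ y : Fin n,
      (inner ℂ ((ι (X y)) (η y)) ((Λ (X x)) (η x)) : ℂ) =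
      ∑ y : Fin n, ∑ x : Fin n, (inner ℂ ((ι (X y)) (η y)) ((Λ (X x)) (η x)) : ℂ) :=
    Finset.sum_comm
  rw [hc]
  ring
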